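/- Let X and Y be metric spaces, γ: [a,b] → X a rectifiable curve, and f: X → Y a mapping with ‖f‖_{B₁} = sup_{z∈X} D*f(z) < ∞ (where D*f(z) = limsup_{y→z} d_Y(f(z),f(y))/d_X(z,y)). Then the image curve f ∘ γ is rectifiable and ℓ(f ∘ γ) ≤ ‖f‖_{B₁} · ℓ(γ). -/

import Mathlib

open Set Filter Metric ENNReal NNReal

/-- `D* f x`: upper dilation of `f` at `x` (0 at isolated points). -/
noncomputable def Dstar {X Y : Type*} [MetricSpace X] [MetricSpace Y] (f : X → Y) (x : X) :
    ℝ≥0∞ :=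
  Filter.limsup (fun y => edist (f x) (f y) / edist x y) (nhdsWithin x {x}ᶜ)

/-- A curve parametrized on `[0,1]` joining `x` to `y`. -/
def IsCurveFrom {X : Type*} [MetricSpace X] (γ : ℝ → X) (x y : X) : Prop :=
  ContinuousOn γ (Set.Icc 0 1) ∧ γ 0 = x ∧ γ 1 = y

/-- Rectifiability of a curve parametrized on `[0,1]`. -/
def RectifiableCurve {X : Type*} [MetricSpace X] (γ : ℝ → X) : Prop :=
  eVariationOn γ (Set.Icc 0 1) ≠ ⊤

/-- `I` is the curve integral of `g` along `γ : [0,1] → X` (limit of Riemann sums with respect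
to arclength). -/
def IsCurveIntegral {X : Type*} [MetricSpace X] (γ : ℝ → X) (g : X → ℝ) (I : ℝ) : Prop :=
  ∀ ε > 0, ∃ δ > 0, ∀ n : ℕ, ∀ t s : ℕ → ℝ,
    0 < n → t 0 = 0 → t n = 1 →
    (∀ i < n, t i < t (i + 1)) →
    (∀ i < n, t (i + 1) - t i < δ) →
    (∀ i < n, s i ∈ Set.Icc (t i) (t (i + 1))) →
    |I - ∑ i ∈ Finset.range n,
        g (γ (s i)) * (eVariationOn γ (Set.Icc (t i) (t (i + 1)))).toReal| < ε

/-- The weighted distance `d_w`. -/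
noncomputable def wDist {X : Type*} [MetricSpace X] (w : X → ℝ) (x y : X) : ℝ :=
  sInf {I | ∃ γ : ℝ → X, IsCurveFrom γ x y ∧ RectifiableCurve γ ∧ IsCurveIntegral γ w I}

/-- The inner (length) distance `d₁`. -/
noncomputable def innerDist {Y : Type*} [MetricSpace Y] (u v : Y) : ℝ :=
  sInf {L | ∃ δ : ℝ → Y, IsCurveFrom δ u v ∧ eVariationOn δ (Set.Icc 0 1) = ENNReal.ofReal L}

/-- The class `RO^K_w(X,Y)` of regularly oscillating mappings. -/
def RegOsc {X Y : Type*} [MetricSpace X] [MetricSpace Y] (w : X → ℝ) (K : ℝ) (f : X → Y) :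
    Prop :=
  (∀ x, Dstar f x ≠ ⊤) ∧
  (∀ x : X, ∀ r : ℝ, 0 < r → r < w x → Bornology.IsBounded (f '' Metric.ball x r)) ∧
  (∀ x : X, ∀ r : ℝ, 0 < r → r < w x →
    Dstar f x ≤ ENNReal.ofReal ((K / r) * ⨆ y : Metric.ball x r, dist (f x) (f y)))
private lemma Icc_add_Icc' {E : Type*} [PseudoEMetricSpace E] (g : ℝ → E) {p q r : ℝ}
    (hpq : p ≤ q) (hqr : q ≤ r) :
    eVariationOn g (Set.Icc p q) + eVariationOn g (Set.Icc q r) = eVariationOn g (Set.Icc p r) := by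
  have := eVariationOn.Icc_add_Icc g (s := (univ : Set ℝ)) hpq hqr (mem_univ q)
  simpa [univ_inter] using this

theorem length_image_le {X Y : Type*} [MetricSpace X] [MetricSpace Y]
    (a b : ℝ) (hab : a ≤ b) (γ : ℝ → X)
    (hγc : ContinuousOn γ (Set.Icc a b))
    (hrect : eVariationOn γ (Set.Icc a b) ≠ ⊤)
    (f : X → Y) (hf : (⨆ z : X, Dstar f z) ≠ ⊤) :
    eVariationOn (f ∘ γ) (Set.Icc a b) ≠ ⊤ ∧
    eVariationOn (f ∘ γ) (Set.Icc a b) ≤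
      (⨆ z : X, Dstar f z) * eVariationOn γ (Set.Icc a b) := by
  set M := ⨆ z : X, Dstar f z with hMdef
  set V := eVariationOn γ (Set.Icc a b) with hVdef
  -- pointwise estimate from the dilation bound
  have hpt : ∀ C : ℝ≥0∞, M < C → ∀ x : X,
      ∀ᶠ y in nhds x, edist (f x) (f y) ≤ C * edist x y := by
    intro C hC x
    have h1 : Filter.limsup (fun y => edist (f x) (f y) / edist x y) (nhdsWithin x {x}ᶜ) < C :=
      lt_of_le_of_lt (le_iSup (fun z => Dstar f z) x) hC
    have h2 := Filter.eventually_lt_of_limsup_lt h1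
    rw [eventually_nhdsWithin_iff] at h2
    filter_upwards [h2] with y hy
    rcases eq_or_ne y x with rfl | hyx
    · simp
    · have h3 := hy (by simpa using hyx)
      have h0 : edist x y ≠ 0 := (edist_pos.mpr (Ne.symm hyx)).ne'
      calc edist (f x) (f y) = edist (f x) (f y) / edist x y * edist x y :=
            (ENNReal.div_mul_cancel h0 (edist_ne_top x y)).symm
        _ ≤ C * edist x y := mul_le_mul_left h3.le _
  -- key estimate along the curve
  have key : ∀ C : ℝ≥0∞, M < C → ∀ s ∈ Set.Icc a b, ∀ t ∈ Set.Icc a b, s ≤ t →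
      edist (f (γ s)) (f (γ t)) ≤ C * eVariationOn γ (Set.Icc s t) := by
    intro C hC s hs t ht hst
    set A := {u | u ∈ Set.Icc s t ∧
      edist (f (γ s)) (f (γ u)) ≤ C * eVariationOn γ (Set.Icc s u)} with hAdef
    have hA0 : s ∈ A := ⟨⟨le_refl s, hst⟩, by simp⟩
    have hbdd : BddAbove A := ⟨t, fun u hu => hu.1.2⟩
    set c := sSup A with hcdef
    have hsc : s ≤ c := le_csSup hbdd hA0
    have hct : c ≤ t := csSup_le ⟨s, hA0⟩ (fun u hu => hu.1.2)
    have hcab : c ∈ Set.Icc a b := ⟨hs.1.trans hsc, hct.trans ht.2⟩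
    have hev : ∀ᶠ v in nhdsWithin c (Set.Icc a b),
        edist (f (γ c)) (f (γ v)) ≤ C * edist (γ c) (γ v) :=
      (hγc c hcab).eventually (hpt C hC (γ c))
    obtain ⟨δ, hδ, hball⟩ := Metric.mem_nhdsWithin_iff.mp hev
    have hcA : c ∈ A := by
      obtain ⟨u, huA, hu⟩ := exists_lt_of_lt_csSup ⟨s, hA0⟩ (show c - δ < c by linarith)
      have huc : u ≤ c := le_csSup hbdd huA
      have hsu : s ≤ u := huA.1.1
      have huab : u ∈ Set.Icc a b := ⟨hs.1.trans hsu, huA.1.2.trans ht.2⟩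
      have hudist : dist u c < δ := by
        rw [Real.dist_eq, abs_lt]; constructor <;> linarith
      have hP := hball ⟨Metric.mem_ball.mpr hudist, huab⟩
      refine ⟨⟨hsc, hct⟩, ?_⟩
      calc edist (f (γ s)) (f (γ c))
          ≤ edist (f (γ s)) (f (γ u)) + edist (f (γ u)) (f (γ c)) := edist_triangle _ _ _
        _ ≤ C * eVariationOn γ (Set.Icc s u) + C * edist (γ c) (γ u) := by
            rw [edist_comm (f (γ u))]; exact add_le_add huA.2 hP
        _ ≤ C * eVariationOn γ (Set.Icc s u) + C * eVariationOn γ (Set.Icc u c) := by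
            refine add_le_add_right (mul_le_mul_right ?_ C) _
            rw [edist_comm]
            exact eVariationOn.edist_le γ ⟨le_refl u, huc⟩ ⟨huc, le_refl c⟩
        _ = C * eVariationOn γ (Set.Icc s c) := by
            rw [← mul_add, Icc_add_Icc' γ hsu huc]
    have hceq : c = t := by
      by_contra h
      have hct' : c < t := lt_of_le_of_ne hct h
      set v := min t (c + δ / 2) with hvdef
      have hcv : c < v := lt_min hct' (by linarith)
      have hvt : v ≤ t := min_le_left _ _
      have hvab : v ∈ Set.Icc a b := ⟨hs.1.trans (hsc.trans hcv.le), hvt.trans ht.2⟩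
      have hvdist : dist v c < δ := by
        have h2 : v ≤ c + δ / 2 := min_le_right _ _
        rw [Real.dist_eq, abs_lt]; constructor <;> linarith
      have hP := hball ⟨Metric.mem_ball.mpr hvdist, hvab⟩
      have hvA : v ∈ A := by
        refine ⟨⟨hsc.trans hcv.le, hvt⟩, ?_⟩
        calc edist (f (γ s)) (f (γ v))
            ≤ edist (f (γ s)) (f (γ c)) + edist (f (γ c)) (f (γ v)) := edist_triangle _ _ _
          _ ≤ C * eVariationOn γ (Set.Icc s c) + C * edist (γ c) (γ v) :=
              add_le_add hcA.2 hP
          _ ≤ C * eVariationOn γ (Set.Icc s c) + C * eVariationOn γ (Set.Icc c v) := by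
              refine add_le_add_right (mul_le_mul_right ?_ C) _
              exact eVariationOn.edist_le γ ⟨le_refl c, hcv.le⟩ ⟨hcv.le, le_refl v⟩
          _ = C * eVariationOn γ (Set.Icc s v) := by
              rw [← mul_add, Icc_add_Icc' γ hsc hcv.le]
      exact absurd (le_csSup hbdd hvA) (not_le.mpr hcv)
    exact hceq ▸ hcA.2
  -- telescoping sum of variations
  have tele : ∀ (u : ℕ → ℝ), Monotone u → ∀ n : ℕ,
      ∑ i ∈ Finset.range n, eVariationOn γ (Set.Icc (u i) (u (i + 1)))
        = eVariationOn γ (Set.Icc (u 0) (u n)) := by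
    intro u hu n
    induction n with
    | zero =>
        simp only [Finset.range_zero, Finset.sum_empty, Set.Icc_self]
        exact (eVariationOn.subsingleton γ subsingleton_singleton).symm
    | succ n ih =>
        rw [Finset.sum_range_succ, ih,
          Icc_add_Icc' γ (hu (Nat.zero_le n)) (hu (Nat.le_succ n))]
  -- main bound for each C > M
  have main : ∀ C : ℝ≥0∞, M < C →
      eVariationOn (f ∘ γ) (Set.Icc a b) ≤ C * V := by
    intro C hC
    rw [eVariationOn]
    refine iSup_le ?_
    rintro ⟨n, u, hu, hus⟩
    calc ∑ i ∈ Finset.range n, edist ((f ∘ γ) (u (i + 1))) ((f ∘ γ) (u i))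
        ≤ ∑ i ∈ Finset.range n, C * eVariationOn γ (Set.Icc (u i) (u (i + 1))) := by
          refine Finset.sum_le_sum fun i _ => ?_
          rw [show edist ((f ∘ γ) (u (i + 1))) ((f ∘ γ) (u i))
              = edist (f (γ (u i))) (f (γ (u (i + 1)))) from edist_comm _ _]
          exact key C hC (u i) (hus i) (u (i + 1)) (hus (i + 1)) (hu (Nat.le_succ i))
      _ = C * eVariationOn γ (Set.Icc (u 0) (u n)) := by
          rw [← Finset.mul_sum, tele u hu n]
      _ ≤ C * V := mul_le_mul_right (eVariationOn.mono γ
            (Set.Icc_subset_Icc (hus 0).1 (hus n).2)) C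
  -- conclude
  have hle : eVariationOn (f ∘ γ) (Set.Icc a b) ≤ M * V := by
    refine ENNReal.le_of_forall_pos_le_add fun ε hε hMV => ?_
    rcases eq_or_ne V 0 with hV0 | hV0
    · calc eVariationOn (f ∘ γ) (Set.Icc a b) ≤ (M + 1) * V :=
            main (M + 1) (ENNReal.lt_add_right hf one_ne_zero)
        _ = 0 := by rw [hV0, mul_zero]
        _ ≤ M * V + ε := zero_le
    · have hεV : (ε : ℝ≥0∞) / V ≠ 0 := by
        simp [ENNReal.div_eq_zero_iff, hrect, ENNReal.coe_ne_zero.mpr hε.ne']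
      calc eVariationOn (f ∘ γ) (Set.Icc a b)
          ≤ (M + ε / V) * V := main _ (ENNReal.lt_add_right hf hεV)
        _ = M * V + ε / V * V := by rw [add_mul]
        _ = M * V + ε := by rw [ENNReal.div_mul_cancel hV0 hrect]
  refine ⟨?_, hle⟩
  exact ne_top_of_le_ne_top (ENNReal.mul_lt_top hf.lt_top hrect.lt_top).ne hle
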